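/- For the bit-reversal sequence e_k = exp(iπ Σ_j a_j 2^{−j}), the ordinary Lebesgue function λ_{E_k}(z) = Σ_{j<k}|l_{j,k}(z)| satisfies λ_{E_{2N}}(z) ≥ λ_{E_N}(z²) for all N ≥ 1 and all z on the unit circle, and consequently λ_{E_k}(e_k) ≥ 2^{σ₁(k)} − 1 for all k ≥ 1. -/

import Mathlib

/-- The bit-reversal (Van der Corput) Leja sequence on the unit circle:
`e k = exp(iπ Σ_j a_j 2^{-j})` where `k = Σ_j a_j 2^j` in binary. -/
noncomputable def e (k : ℕ) : ℂ :=
  Complex.exp (Real.pi * Complex.I *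
    ∑ j ∈ Finset.range (k + 1), if k.testBit j then ((1 : ℂ) / 2) ^ j else 0)

/-- Lagrange basis polynomial of index `j` for the nodes `z 0, …, z (k-1)`. -/
noncomputable def lag (z : ℕ → ℂ) (j k : ℕ) (x : ℂ) : ℂ :=
  ∏ i ∈ (Finset.range k).erase j, (x - z i) / (z j - z i)

/-- Quadratic Lebesgue function of the first `k` nodes. -/
noncomputable def leb2 (z : ℕ → ℂ) (k : ℕ) (x : ℂ) : ℝ :=
  Real.sqrt (∑ j ∈ Finset.range k, ‖lag z j k x‖ ^ 2)

/-- Ordinary Lebesgue function of the first `k` nodes. -/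
noncomputable def leb (z : ℕ → ℂ) (k : ℕ) (x : ℂ) : ℝ :=
  ∑ j ∈ Finset.range k, ‖lag z j k x‖

/-- number of ones in the binary expansion -/
def sigma1 (k : ℕ) : ℕ := (Nat.digits 2 k).count 1

namespace LebAux

open Finset

/-- The fractional bit-reversal value, as a real number. -/
noncomputable def fr (k : ℕ) : ℝ :=
  ∑ j ∈ Finset.range (k + 1), if k.testBit j then ((1 : ℝ) / 2) ^ j else 0

lemma testBit_false {k j : ℕ} (h : k + 1 ≤ j) : k.testBit j = false := by
  apply Nat.testBit_eq_false_of_lt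
  calc k < 2 ^ k := Nat.lt_two_pow_self
    _ ≤ 2 ^ j := Nat.pow_le_pow_right (by norm_num) (by omega)

lemma fr_sum {k n : ℕ} (h : k + 1 ≤ n) :
    ∑ j ∈ Finset.range n, (if k.testBit j then ((1 : ℝ) / 2) ^ j else 0) = fr k := by
  rw [fr]
  refine (Finset.sum_subset (Finset.range_subset_range.2 h) ?_).symm
  intro j _ hj'
  have hj : k + 1 ≤ j := by
    simp only [Finset.mem_range, not_lt] at hj'; omega
  simp [testBit_false hj]

lemma fr_zero : fr 0 = 0 := by
  simp [fr, Nat.zero_testBit]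

lemma fr_even (t : ℕ) : fr (2 * t) = fr t / 2 := by
  rcases Nat.eq_zero_or_pos t with rfl | ht
  · norm_num [fr_zero]
  have h1 : fr (2 * t)
      = ∑ j ∈ Finset.range (2 * t + 1), (if (2 * t).testBit j then ((1 : ℝ) / 2) ^ j else 0) := rfl
  rw [h1, Finset.sum_range_succ']
  have h0 : (if (2 * t).testBit 0 then ((1 : ℝ) / 2) ^ 0 else 0) = 0 := by
    simp [Nat.testBit_zero, Nat.mul_mod_right]
  rw [h0, add_zero]
  have hterm : ∀ j, (if (2 * t).testBit (j + 1) then ((1 : ℝ) / 2) ^ (j + 1) else 0)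
      = (1 / 2) * (if t.testBit j then ((1 : ℝ) / 2) ^ j else 0) := by
    intro j
    rw [Nat.testBit_add_one]
    have h2 : 2 * t / 2 = t := by omega
    rw [h2, pow_succ]
    split <;> ring
  rw [Finset.sum_congr rfl (fun j _ => hterm j), ← Finset.mul_sum, fr_sum (by omega)]
  ring

lemma fr_odd (t : ℕ) : fr (2 * t + 1) = 1 + fr t / 2 := by
  have h1 : fr (2 * t + 1)
      = ∑ j ∈ Finset.range (2 * t + 1 + 1),
          (if (2 * t + 1).testBit j then ((1 : ℝ) / 2) ^ j else 0) := rfl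
  rw [h1, Finset.sum_range_succ']
  have h0 : (if (2 * t + 1).testBit 0 then ((1 : ℝ) / 2) ^ 0 else 0) = 1 := by
    simp [Nat.testBit_zero, Nat.mul_add_mod]
  rw [h0]
  have hterm : ∀ j, (if (2 * t + 1).testBit (j + 1) then ((1 : ℝ) / 2) ^ (j + 1) else 0)
      = (1 / 2) * (if t.testBit j then ((1 : ℝ) / 2) ^ j else 0) := by
    intro j
    rw [Nat.testBit_add_one]
    have h2 : (2 * t + 1) / 2 = t := by omega
    rw [h2, pow_succ]
    split <;> ring
  rw [Finset.sum_congr rfl (fun j _ => hterm j), ← Finset.mul_sum, fr_sum (by omega)]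
  ring

lemma fr_nonneg (k : ℕ) : 0 ≤ fr k := by
  apply Finset.sum_nonneg
  intro j _
  split <;> positivity

lemma fr_lt_two : ∀ k, fr k < 2 := by
  intro k
  induction k using Nat.strong_induction_on with
  | _ k ih =>
    rcases Nat.eq_zero_or_pos k with rfl | hk
    · rw [fr_zero]; norm_num
    rcases Nat.even_or_odd k with ⟨t, ht⟩ | ⟨t, ht⟩
    · have ht' : k = 2 * t := by omega
      have h1 : 1 ≤ t := by omega
      rw [ht', fr_even]
      have := ih t (by omega)
      linarith
    · rw [ht, fr_odd]
      have := ih t (by omega)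
      linarith

lemma fr_inj_aux : ∀ n k j, k + j ≤ n → fr k = fr j → k = j := by
  intro n
  induction n with
  | zero => intro k j h _; omega
  | succ n ih =>
    intro k j h hfr
    rcases Nat.even_or_odd k with ⟨a, ha⟩ | ⟨a, ha⟩ <;>
      rcases Nat.even_or_odd j with ⟨b, hb⟩ | ⟨b, hb⟩
    · have ha' : k = 2 * a := by omega
      have hb' : j = 2 * b := by omega
      rw [ha', hb', fr_even, fr_even] at hfr
      have hab : a = b := ih a b (by omega) (by linarith)
      omega
    · have ha' : k = 2 * a := by omega
      rw [ha', fr_even, hb, fr_odd] at hfr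
      have h1 := fr_lt_two a
      have h2 := fr_nonneg b
      linarith
    · have hb' : j = 2 * b := by omega
      rw [ha, fr_odd, hb', fr_even] at hfr
      have h1 := fr_lt_two b
      have h2 := fr_nonneg a
      linarith
    · rw [ha, hb, fr_odd, fr_odd] at hfr
      have hab : a = b := ih a b (by omega) (by linarith)
      omega

lemma fr_inj {k j : ℕ} (h : fr k = fr j) : k = j :=
  fr_inj_aux (k + j) k j le_rfl h

lemma e_eq (k : ℕ) : e k = Complex.exp (Real.pi * Complex.I * (fr k : ℂ)) := by
  rw [e]
  congr 2
  simp only [fr, Complex.ofReal_sum, apply_ite Complex.ofReal, Complex.ofReal_pow,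
    Complex.ofReal_zero, Complex.ofReal_div, Complex.ofReal_one, Complex.ofReal_ofNat]

lemma e_ne_zero (k : ℕ) : e k ≠ 0 := by
  rw [e_eq]; exact Complex.exp_ne_zero _

lemma abs_e (k : ℕ) : ‖e k‖ = 1 := by
  rw [e_eq]
  have h : (Real.pi : ℂ) * Complex.I * (fr k : ℂ) = ((Real.pi * fr k : ℝ) : ℂ) * Complex.I := by
    push_cast; ring
  rw [h, Complex.norm_exp_ofReal_mul_I]

lemma e_sq (t : ℕ) : e (2 * t) ^ 2 = e t := by
  rw [e_eq, e_eq, ← Complex.exp_nat_mul]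
  congr 1
  rw [fr_even]
  push_cast
  ring

lemma e_odd (t : ℕ) : e (2 * t + 1) = -e (2 * t) := by
  rw [e_eq, e_eq]
  have h : (Real.pi : ℂ) * Complex.I * ((fr (2 * t + 1) : ℝ) : ℂ)
      = (Real.pi * Complex.I) + Real.pi * Complex.I * ((fr (2 * t) : ℝ) : ℂ) := by
    rw [fr_odd, fr_even]
    push_cast
    ring
  rw [h, Complex.exp_add, Complex.exp_pi_mul_I]
  ring

lemma e_inj {k j : ℕ} (h : e k = e j) : k = j := by
  rw [e_eq, e_eq, Complex.exp_eq_exp_iff_exists_int] at h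
  obtain ⟨n, hn⟩ := h
  have hπ : (Real.pi : ℂ) ≠ 0 := by
    exact_mod_cast Real.pi_ne_zero
  have h2 : ((fr k : ℂ) - (fr j : ℂ) - 2 * n) * (Real.pi * Complex.I) = 0 := by
    linear_combination hn
  rcases mul_eq_zero.mp h2 with h3 | h3
  · have h4 : (fr k : ℂ) = ((fr j + 2 * (n : ℝ) : ℝ) : ℂ) := by
      push_cast
      linear_combination h3
    have h5 : fr k = fr j + 2 * (n : ℝ) := by exact_mod_cast h4
    have hk1 := fr_lt_two k
    have hk2 := fr_nonneg k
    have hj1 := fr_lt_two j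
    have hj2 := fr_nonneg j
    have hn1 : (-1 : ℝ) < (n : ℝ) := by linarith
    have hn2 : (n : ℝ) < 1 := by linarith
    have hn0 : n = 0 := by
      have : (-1 : ℤ) < n := by exact_mod_cast hn1
      have : n < 1 := by exact_mod_cast hn2
      omega
    apply fr_inj
    rw [hn0] at h5
    push_cast at h5
    linarith
  · exfalso
    rcases mul_eq_zero.mp h3 with h4 | h4
    · exact hπ h4
    · exact Complex.I_ne_zero h4

section Pairing

variable {M : Type*} [CommMonoid M]

lemma prod_pair (m : ℕ) (g : ℕ → M) :
    ∏ t ∈ Finset.range (2 * m), g t = ∏ s ∈ Finset.range m, (g (2 * s) * g (2 * s + 1)) := by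
  induction m with
  | zero => simp
  | succ m ih =>
    have h : 2 * (m + 1) = (2 * m + 1) + 1 := by ring
    rw [h, Finset.prod_range_succ, Finset.prod_range_succ, Finset.prod_range_succ, ih, mul_assoc]

end Pairing

lemma sum_pair (m : ℕ) (g : ℕ → ℝ) :
    ∑ t ∈ Finset.range (2 * m), g t = ∑ s ∈ Finset.range m, (g (2 * s) + g (2 * s + 1)) := by
  induction m with
  | zero => simp
  | succ m ih =>
    have h : 2 * (m + 1) = (2 * m + 1) + 1 := by ring
    rw [h, Finset.sum_range_succ, Finset.sum_range_succ, Finset.sum_range_succ, ih, add_assoc]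

lemma prod_erase_even (g : ℕ → ℂ) {m i : ℕ} (hi : i < m) :
    ∏ t ∈ (Finset.range (2 * m)).erase (2 * i), g t
      = g (2 * i + 1) * ∏ s ∈ (Finset.range m).erase i, (g (2 * s) * g (2 * s + 1)) := by
  set G : ℕ → ℂ := fun t => if t = 2 * i then 1 else g t with hG
  have h2i : 2 * i ∈ Finset.range (2 * m) := by
    simp only [Finset.mem_range]; omega
  have e1 : ∏ t ∈ (Finset.range (2 * m)).erase (2 * i), g t
      = ∏ t ∈ (Finset.range (2 * m)).erase (2 * i), G t := by
    refine Finset.prod_congr rfl (fun t ht => ?_)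
    have hne := (Finset.mem_erase.mp ht).1
    simp [hG, hne]
  have e2 : ∏ t ∈ Finset.range (2 * m), G t
      = ∏ t ∈ (Finset.range (2 * m)).erase (2 * i), G t := by
    rw [← Finset.mul_prod_erase _ G h2i]
    simp [hG]
  have e3 : ∏ t ∈ Finset.range (2 * m), G t
      = ∏ s ∈ Finset.range m, (G (2 * s) * G (2 * s + 1)) := prod_pair m G
  have e4 : ∏ s ∈ Finset.range m, (G (2 * s) * G (2 * s + 1))
      = (G (2 * i) * G (2 * i + 1))
        * ∏ s ∈ (Finset.range m).erase i, (G (2 * s) * G (2 * s + 1)) :=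
    (Finset.mul_prod_erase _ _ (Finset.mem_range.2 hi)).symm
  have e5 : ∏ s ∈ (Finset.range m).erase i, (G (2 * s) * G (2 * s + 1))
      = ∏ s ∈ (Finset.range m).erase i, (g (2 * s) * g (2 * s + 1)) := by
    refine Finset.prod_congr rfl (fun s hs => ?_)
    have hne := (Finset.mem_erase.mp hs).1
    have h1 : 2 * s ≠ 2 * i := by omega
    have h2 : 2 * s + 1 ≠ 2 * i := by omega
    simp [hG, h1, h2]
  have e6 : G (2 * i) = 1 := by simp [hG]
  have e7 : G (2 * i + 1) = g (2 * i + 1) := by simp [hG]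
  rw [e1, ← e2, e3, e4, e5, e6, e7, one_mul]

lemma prod_erase_odd (g : ℕ → ℂ) {m i : ℕ} (hi : i < m) :
    ∏ t ∈ (Finset.range (2 * m)).erase (2 * i + 1), g t
      = g (2 * i) * ∏ s ∈ (Finset.range m).erase i, (g (2 * s) * g (2 * s + 1)) := by
  set G : ℕ → ℂ := fun t => if t = 2 * i + 1 then 1 else g t with hG
  have h2i : 2 * i + 1 ∈ Finset.range (2 * m) := by
    simp only [Finset.mem_range]; omega
  have e1 : ∏ t ∈ (Finset.range (2 * m)).erase (2 * i + 1), g t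
      = ∏ t ∈ (Finset.range (2 * m)).erase (2 * i + 1), G t := by
    refine Finset.prod_congr rfl (fun t ht => ?_)
    have hne := (Finset.mem_erase.mp ht).1
    simp [hG, hne]
  have e2 : ∏ t ∈ Finset.range (2 * m), G t
      = ∏ t ∈ (Finset.range (2 * m)).erase (2 * i + 1), G t := by
    rw [← Finset.mul_prod_erase _ G h2i]
    simp [hG]
  have e3 : ∏ t ∈ Finset.range (2 * m), G t
      = ∏ s ∈ Finset.range m, (G (2 * s) * G (2 * s + 1)) := prod_pair m G
  have e4 : ∏ s ∈ Finset.range m, (G (2 * s) * G (2 * s + 1))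
      = (G (2 * i) * G (2 * i + 1))
        * ∏ s ∈ (Finset.range m).erase i, (G (2 * s) * G (2 * s + 1)) :=
    (Finset.mul_prod_erase _ _ (Finset.mem_range.2 hi)).symm
  have e5 : ∏ s ∈ (Finset.range m).erase i, (G (2 * s) * G (2 * s + 1))
      = ∏ s ∈ (Finset.range m).erase i, (g (2 * s) * g (2 * s + 1)) := by
    refine Finset.prod_congr rfl (fun s hs => ?_)
    have hne := (Finset.mem_erase.mp hs).1
    have h1 : 2 * s ≠ 2 * i + 1 := by omega
    have h2 : 2 * s + 1 ≠ 2 * i + 1 := by omega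
    simp [hG, h1, h2, hne]
  have e6 : G (2 * i) = g (2 * i) := by simp [hG]
  have e7 : G (2 * i + 1) = 1 := by simp [hG]
  rw [e1, ← e2, e3, e4, e5, e6, e7, mul_one]

lemma lag_succ (j k : ℕ) (hj : j < k) (x : ℂ) :
    lag e j (k + 1) x = lag e j k x * ((x - e k) / (e j - e k)) := by
  simp only [lag]
  rw [Finset.range_add_one, Finset.erase_insert_of_ne (by omega : k ≠ j),
    Finset.prod_insert (by simp)]
  ring

lemma key_even {m i : ℕ} (hi : i < m) (x : ℂ) :
    lag e (2 * i) (2 * m) x = ((x + e (2 * i)) / (2 * e (2 * i))) * lag e i m (x ^ 2) := by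
  simp only [lag]
  rw [prod_erase_even (fun t => (x - e t) / (e (2 * i) - e t)) hi]
  congr 1
  · rw [e_odd i]
    congr 1 <;> ring
  · refine Finset.prod_congr rfl (fun s _ => ?_)
    rw [div_mul_div_comm, e_odd s]
    congr 1
    · rw [← e_sq s]; ring
    · rw [← e_sq i, ← e_sq s]; ring

lemma key_odd {m i : ℕ} (hi : i < m) (x : ℂ) :
    lag e (2 * i + 1) (2 * m) x
      = ((x - e (2 * i)) / (-(2 * e (2 * i)))) * lag e i m (x ^ 2) := by
  simp only [lag]
  rw [prod_erase_odd (fun t => (x - e t) / (e (2 * i + 1) - e t)) hi]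
  congr 1
  · rw [e_odd i]
    congr 1
    ring
  · refine Finset.prod_congr rfl (fun s _ => ?_)
    rw [div_mul_div_comm, e_odd s, e_odd i]
    congr 1
    · rw [← e_sq s]; ring
    · rw [← e_sq i, ← e_sq s]; ring

lemma key_last (m : ℕ) (x : ℂ) :
    lag e (2 * m) (2 * m + 1) x
      = ∏ s ∈ Finset.range m, ((x ^ 2 - e s) / (e m - e s)) := by
  simp only [lag]
  have h : (Finset.range (2 * m + 1)).erase (2 * m) = Finset.range (2 * m) := by
    rw [Finset.range_add_one, Finset.erase_insert (by simp)]
  rw [h, prod_pair m]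
  refine Finset.prod_congr rfl (fun s _ => ?_)
  rw [div_mul_div_comm, e_odd s]
  congr 1
  · rw [← e_sq s]; ring
  · rw [← e_sq m, ← e_sq s]; ring

lemma part1 (N : ℕ) (z : ℂ) (hz : ‖z‖ = 1) :
    leb e N (z ^ 2) ≤ leb e (2 * N) z := by
  rw [leb, leb, sum_pair N (fun t => ‖lag e t (2 * N) z‖)]
  apply Finset.sum_le_sum
  intro s hs
  have hs' : s < N := Finset.mem_range.mp hs
  rw [key_even hs', key_odd hs', norm_mul, norm_mul, norm_div, norm_div]
  have hw : ‖e (2 * s)‖ = 1 := abs_e _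
  have h2w : ‖2 * e (2 * s)‖ = 2 := by
    rw [norm_mul, hw]; simp
  have h2w' : ‖-(2 * e (2 * s))‖ = 2 := by
    rw [norm_neg]; exact h2w
  rw [h2w, h2w']
  have key : (2 : ℝ) ≤ ‖z + e (2 * s)‖ + ‖z - e (2 * s)‖ := by
    calc (2 : ℝ) = ‖(z + e (2 * s)) + (z - e (2 * s))‖ := by
          rw [show (z + e (2 * s)) + (z - e (2 * s)) = 2 * z by ring, norm_mul, hz]
          simp
      _ ≤ _ := norm_add_le _ _
  have hL := norm_nonneg (lag e s N (z ^ 2))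
  nlinarith [norm_nonneg (z + e (2 * s)), norm_nonneg (z - e (2 * s))]

lemma odd_step (m : ℕ) : leb e (2 * m + 1) (e (2 * m + 1)) = 2 * leb e m (e m) + 1 := by
  have hx : e (2 * m + 1) = -e (2 * m) := e_odd m
  have hx2 : (e (2 * m + 1)) ^ 2 = e m := by
    rw [hx, neg_sq, e_sq]
  rw [leb, Finset.sum_range_succ,
    sum_pair m (fun t => ‖lag e t (2 * m + 1) (e (2 * m + 1))‖)]
  have hlast : ‖lag e (2 * m) (2 * m + 1) (e (2 * m + 1))‖ = 1 := by
    rw [key_last, hx2]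
    rw [Finset.prod_congr rfl (fun s hs => div_self (sub_ne_zero.mpr (fun h => by
      have h1 := e_inj h
      have h2 := Finset.mem_range.mp hs
      omega)))]
    simp
  have hpair : ∀ s ∈ Finset.range m,
      (‖lag e (2 * s) (2 * m + 1) (e (2 * m + 1))‖
        + ‖lag e (2 * s + 1) (2 * m + 1) (e (2 * m + 1))‖)
      = 2 * ‖lag e s m (e m)‖ := by
    intro s hs
    have hsm : s < m := Finset.mem_range.mp hs
    have hd : e (2 * s) - e (2 * m) ≠ 0 := by
      rw [sub_ne_zero]
      intro h
      have := e_inj h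
      omega
    have hd' : -(e (2 * s) + e (2 * m)) ≠ 0 := by
      intro h
      have hw : e (2 * s) = -e (2 * m) := by linear_combination -h
      rw [← hx] at hw
      have := e_inj hw
      omega
    have hD : ‖e (2 * s) - e (2 * m)‖ ≠ 0 := norm_ne_zero_iff.mpr hd
    have hD' : ‖e (2 * s) + e (2 * m)‖ ≠ 0 := norm_ne_zero_iff.mpr (by
      intro h; exact hd' (by rw [h, neg_zero]))
    have habs_even : ‖lag e (2 * s) (2 * m + 1) (e (2 * m + 1))‖
        = ‖lag e s m (e m)‖ := by
      rw [lag_succ _ _ (by omega), key_even hsm, hx2]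
      have h1 : e (2 * m + 1) + e (2 * s) = e (2 * s) - e (2 * m) := by rw [hx]; ring
      have h2 : e (2 * m + 1) - e (2 * m) = -(2 * e (2 * m)) := by rw [hx]; ring
      rw [h1, h2, norm_mul, norm_mul, norm_div, norm_div, norm_neg]
      have h3 : ‖2 * e (2 * s)‖ = 2 := by
        rw [norm_mul, abs_e]; simp
      have h4 : ‖2 * e (2 * m)‖ = 2 := by
        rw [norm_mul, abs_e]; simp
      rw [h3, h4]
      field_simp
    have habs_odd : ‖lag e (2 * s + 1) (2 * m + 1) (e (2 * m + 1))‖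
        = ‖lag e s m (e m)‖ := by
      rw [lag_succ _ _ (by omega), key_odd hsm, hx2, e_odd s]
      have h1 : e (2 * m + 1) - e (2 * s) = -(e (2 * s) + e (2 * m)) := by rw [hx]; ring
      have h2 : -e (2 * s) - e (2 * m) = -(e (2 * s) + e (2 * m)) := by ring
      have h3 : e (2 * m + 1) - e (2 * m) = -(2 * e (2 * m)) := by rw [hx]; ring
      rw [h1, h2, h3, norm_mul, norm_mul, norm_div, norm_div, norm_neg, norm_neg, norm_neg]
      have h4 : ‖2 * e (2 * s)‖ = 2 := by
        rw [norm_mul, abs_e]; simp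
      have h5 : ‖2 * e (2 * m)‖ = 2 := by
        rw [norm_mul, abs_e]; simp
      rw [h4, h5]
      field_simp
    rw [habs_even, habs_odd]
    ring
  rw [Finset.sum_congr rfl hpair, hlast, ← Finset.mul_sum, leb]

lemma sigma1_even {m : ℕ} (hm : 1 ≤ m) : sigma1 (2 * m) = sigma1 m := by
  rw [sigma1, sigma1, Nat.digits_def' (by norm_num : 1 < 2) (by omega : 0 < 2 * m)]
  have h1 : 2 * m % 2 = 0 := by omega
  have h2 : 2 * m / 2 = m := by omega
  rw [h1, h2, List.count_cons]
  simp

lemma sigma1_odd (m : ℕ) : sigma1 (2 * m + 1) = sigma1 m + 1 := by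
  rw [sigma1, sigma1, Nat.digits_def' (by norm_num : 1 < 2) (by omega : 0 < 2 * m + 1)]
  have h1 : (2 * m + 1) % 2 = 1 := by omega
  have h2 : (2 * m + 1) / 2 = m := by omega
  rw [h1, h2, List.count_cons]
  simp

lemma sigma1_one : sigma1 1 = 1 := by
  have := sigma1_odd 0
  simp only [sigma1] at this ⊢; simpa using this

lemma leb_one : leb e 1 (e 1) = 1 := by
  simp [leb, lag]

lemma part2 : ∀ k : ℕ, 1 ≤ k → (2 : ℝ) ^ sigma1 k - 1 ≤ leb e k (e k) := by
  intro k
  induction k using Nat.strong_induction_on with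
  | _ k ih =>
    intro hk
    rcases Nat.even_or_odd k with ⟨m, hm⟩ | ⟨m, hm⟩
    · have hm2 : k = 2 * m := by omega
      subst hm2
      have hm1 : 1 ≤ m := by omega
      rw [sigma1_even hm1]
      have h1 := part1 m (e (2 * m)) (abs_e _)
      rw [e_sq m] at h1
      have h2 := ih m (by omega) hm1
      linarith
    · subst hm
      rcases Nat.eq_zero_or_pos m with rfl | hm1
      · norm_num [sigma1_one, leb_one]
      · rw [sigma1_odd, odd_step, pow_succ]
        have h2 := ih m (by omega) hm1
        linarith

end LebAux

theorem leb_lower_bounds :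
    (∀ N : ℕ, 1 ≤ N → ∀ z : ℂ, ‖z‖ = 1 → leb e N (z ^ 2) ≤ leb e (2 * N) z) ∧
      ∀ k : ℕ, 1 ≤ k → (2 : ℝ) ^ sigma1 k - 1 ≤ leb e k (e k) :=
  ⟨fun N _ z hz => LebAux.part1 N z hz, LebAux.part2⟩
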